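/- Let f : A^k → ℕ be a function and s₁, s₂ ∈ A^{k−1}. If there exists a word w of length n starting with s₁ and ending with s₂ such that f(t) = |w|_t for every t ∈ A^k, then for every s ∈ A^{k−1}, Σ_{a∈A} f(as) = Σ_{a∈A} f(sa) + c_s, where c_s = −1 if s = s₁ ≠ s₂, c_s = 1 if s = s₂ ≠ s₁, and c_s = 0 otherwise. -/

import Mathlib

/-- Number of occurrences of `x` as a factor of `w`. -/
def occ {A : Type*} [DecidableEq A] (w x : List A) : ℕ :=
  ((List.range (w.length + 1)).filter (fun i => decide (x <+: w.drop i))).length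

section Aux
set_option linter.unusedSectionVars false
variable {A : Type*} [Fintype A] [DecidableEq A]

lemma occ_nil (x : List A) : occ ([] : List A) x = if x = [] then 1 else 0 := by
  by_cases h : x = [] <;> simp [occ, List.range_succ, List.prefix_nil, h]

lemma occ_cons (b : A) (w x : List A) :
    occ (b :: w) x = (if x <+: b :: w then 1 else 0) + occ w x := by
  have : List.range (w.length + 1 + 1) = 0 :: (List.range (w.length + 1)).map Nat.succ :=
    List.range_succ_eq_map
  simp only [occ, List.length_cons, this, List.filter_cons, List.filter_map,
    Function.comp_def, List.drop_succ_cons, List.drop_zero]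
  by_cases h : x <+: b :: w <;> simp [h, Nat.add_comm]

lemma prefix_snoc_iff (s v : List A) (a : A) :
    s ++ [a] <+: v ↔ s <+: v ∧ v[s.length]? = some a := by
  constructor
  · rintro ⟨t, rfl⟩
    refine ⟨⟨[a] ++ t, by simp⟩, ?_⟩
    rw [List.append_assoc, List.getElem?_append_right (le_refl _)]
    simp
  · rintro ⟨⟨u, rfl⟩, h⟩
    rw [List.getElem?_append_right (le_refl _)] at h
    simp at h
    match u, h with
    | x :: u', h => exact ⟨u', by simp at h; simp [h]⟩

lemma sum_ite_snoc (v s : List A) :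
    (∑ a : A, if (s ++ [a]) <+: v then 1 else 0)
      = if s <+: v ∧ s.length < v.length then 1 else 0 := by
  simp only [prefix_snoc_iff]
  by_cases hp : s <+: v
  · by_cases hl : s.length < v.length
    · have : v[s.length]? = some (v[s.length]'hl) := List.getElem?_eq_getElem hl
      simp [hp, hl, this]
    · have : v[s.length]? = none := by
        rw [List.getElem?_eq_none]; omega
      simp [hp, hl, this]
  · simp [hp]

lemma sum_occ_snoc (w s : List A) :
    (∑ a : A, occ w (s ++ [a])) + (if s <:+ w then 1 else 0) = occ w s := by
  induction w with
  | nil =>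
    by_cases h : s = [] <;> simp [occ_nil, List.suffix_nil, h]
  | cons b w ih =>
    have key : (if s <+: b :: w ∧ s.length < w.length + 1 then 1 else 0)
        + (if s <:+ b :: w then 1 else 0)
        = (if s <+: b :: w then 1 else 0) + (if s <:+ w then 1 else 0) := by
      rcases le_or_gt s.length w.length with hle | hgt
      · have h1 : s ≠ b :: w := by intro h; rw [h] at hle; simp at hle
        have h2 : (s <:+ b :: w) ↔ (s <:+ w) := by
          rw [List.suffix_cons_iff]; simp [h1]
        simp only [h2]
        have : s.length < w.length + 1 := by omega
        simp [this]
      · have h1 : ¬ (s <:+ w) := fun h => by have := h.length_le; omega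
        have h2 : (s <+: b :: w ∧ s.length < w.length + 1) ↔ False := by
          simp only [iff_false]; rintro ⟨h, hl⟩; omega
        have h3 : (s <:+ b :: w) ↔ (s <+: b :: w) := by
          constructor
          · intro h
            have := h.length_le; simp at this
            rw [List.IsSuffix.eq_of_length h (by simp; omega)]
          · intro h
            have := h.length_le; simp at this
            rw [List.IsPrefix.eq_of_length h (by simp; omega)]
        simp [h1, h2, h3, hgt]
    have h1 := sum_ite_snoc (b :: w) s
    simp only [occ_cons, Finset.sum_add_distrib, h1, List.length_cons]
    omega

lemma sum_occ_cons (w s : List A) :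
    (∑ a : A, occ w (a :: s)) + (if s <+: w then 1 else 0) = occ w s := by
  induction w with
  | nil => by_cases h : s = [] <;> simp [occ_nil, List.prefix_nil, h]
  | cons b w ih =>
    have h1 : (∑ a : A, if (a :: s) <+: (b :: w) then 1 else 0)
        = if s <+: w then 1 else 0 := by
      by_cases h : s <+: w <;> simp [List.cons_prefix_cons, h]
    simp only [occ_cons, Finset.sum_add_distrib, h1]
    omega

end Aux

theorem stmt10 {A : Type*} [Fintype A] [DecidableEq A] (k : ℕ) (hk : 1 ≤ k)
    (s₁ s₂ : List A) (hs₁ : s₁.length = k - 1) (hs₂ : s₂.length = k - 1)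
    (f : List A → ℕ) (w : List A)
    (hpref : s₁ <+: w) (hsuff : s₂ <:+ w)
    (hf : ∀ t : List A, t.length = k → f t = occ w t) :
    ∀ s : List A, s.length = k - 1 →
      (∑ a : A, (f (a :: s) : ℤ)) =
        (∑ a : A, (f (s ++ [a]) : ℤ)) +
          (if s = s₁ ∧ s ≠ s₂ then -1 else if s = s₂ ∧ s ≠ s₁ then 1 else 0) := by
  intro s hs
  have hlen : ∀ a : A, (a :: s).length = k := by intro a; simp [hs]; omega
  have hlen' : ∀ a : A, (s ++ [a]).length = k := by intro a; simp [hs]; omega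
  have hP : (s <+: w) ↔ s = s₁ := by
    constructor
    · intro h
      rcases List.prefix_or_prefix_of_prefix h hpref with h' | h'
      · exact h'.eq_of_length (hs.trans hs₁.symm)
      · exact (h'.eq_of_length (hs₁.trans hs.symm)).symm
    · rintro rfl; exact hpref
  have hS : (s <:+ w) ↔ s = s₂ := by
    constructor
    · intro h
      rcases List.suffix_or_suffix_of_suffix h hsuff with h' | h'
      · exact h'.eq_of_length (hs.trans hs₂.symm)
      · exact (h'.eq_of_length (hs₂.trans hs.symm)).symm
    · rintro rfl; exact hsuff
  have e1 := sum_occ_cons w s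
  have e2 := sum_occ_snoc w s
  simp only [hP] at e1; simp only [hS] at e2
  have E1 : (∑ a : A, (f (a :: s) : ℤ)) + (if s = s₁ then 1 else 0) = occ w s := by
    have : (∑ a : A, (f (a :: s) : ℤ)) = ((∑ a : A, occ w (a :: s) : ℕ) : ℤ) := by
      push_cast; exact Finset.sum_congr rfl fun a _ => by rw [hf _ (hlen a)]
    rw [this, ← e1]; push_cast; ring
  have E2 : (∑ a : A, (f (s ++ [a]) : ℤ)) + (if s = s₂ then 1 else 0) = occ w s := by
    have : (∑ a : A, (f (s ++ [a]) : ℤ)) = ((∑ a : A, occ w (s ++ [a]) : ℕ) : ℤ) := by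
      push_cast; exact Finset.sum_congr rfl fun a _ => by rw [hf _ (hlen' a)]
    rw [this, ← e2]; push_cast; ring
  by_cases h1 : s = s₁ <;> by_cases h2 : s = s₂
  · have h12 : s₁ = s₂ := h1.symm.trans h2
    simp [h1, h2, h12] at E1 E2 ⊢; linarith
  · have h12 : s₁ ≠ s₂ := fun h => h2 (h1.trans h)
    simp [h1, h2, h12, Ne.symm h12] at E1 E2 ⊢; linarith
  · have h12 : s₂ ≠ s₁ := fun h => h1 (h2.trans h)
    simp [h1, h2, h12, Ne.symm h12] at E1 E2 ⊢; linarith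
  · simp [h1, h2] at E1 E2 ⊢; linarith
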